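/- Let p be an odd prime. The lattice Λ₀ = Λ(0; 1, −1, 0; −1, 1, 0; 0) of Zorn vector matrices over ℚ_p is an order (it contains 1 and is closed under Zorn multiplication), and it is maximal among orders of this diagonal form: for any integers b₁, …, b₈, if Λ(b₁; b₂, b₃, b₄; b₅, b₆, b₇; b₈) is an order and contains Λ₀, then Λ(b₁; b₂, b₃, b₄; b₅, b₆, b₇; b₈) = Λ₀. -/

import Mathlib

open Matrix

/-- A Zorn vector matrix (split octonion) over `k`. -/
abbrev Zorn (k : Type*) := k × (Fin 3 → k) × (Fin 3 → k) × k

/-- The Zorn product of two Zorn vector matrices. -/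
def zmul {k : Type*} [Field k] (x y : Zorn k) : Zorn k :=
  (x.1 * y.1 + x.2.1 ⬝ᵥ y.2.2.1,
   x.1 • y.2.1 + y.2.2.2 • x.2.1 - x.2.2.1 ⨯₃ y.2.2.1,
   y.1 • x.2.2.1 + x.2.2.2 • y.2.2.1 + x.2.1 ⨯₃ y.2.1,
   x.2.2.2 * y.2.2.2 + x.2.2.1 ⬝ᵥ y.2.1)

/-- The identity Zorn vector matrix. -/
def zone {k : Type*} [Field k] : Zorn k := (1, 0, 0, 1)

variable (p : ℕ) [Fact p.Prime]

/-- `a` lies in `p^n ℤ_p ⊆ ℚ_p`. -/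
def inLat (n : ℤ) (a : ℚ_[p]) : Prop := ∃ z : ℤ_[p], a = (p : ℚ_[p]) ^ n * (z : ℚ_[p])

/-- The lattice `Λ(a₁; a₂, a₃, a₄; a₅, a₆, a₇; a₈)` of Zorn vector matrices over `ℚ_p`. -/
def Lam (a₁ a₂ a₃ a₄ a₅ a₆ a₇ a₈ : ℤ) : Set (Zorn ℚ_[p]) :=
  {x | inLat p a₁ x.1 ∧ inLat p a₂ (x.2.1 0) ∧ inLat p a₃ (x.2.1 1) ∧
       inLat p a₄ (x.2.1 2) ∧ inLat p a₅ (x.2.2.1 0) ∧ inLat p a₆ (x.2.2.1 1) ∧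
       inLat p a₇ (x.2.2.1 2) ∧ inLat p a₈ x.2.2.2}

/-- A set of Zorn vector matrices is an order if it contains `1` and is
closed under the Zorn product. -/
def IsOrder (S : Set (Zorn ℚ_[p])) : Prop :=
  zone ∈ S ∧ ∀ x ∈ S, ∀ y ∈ S, zmul x y ∈ S


lemma pQ_ne : (p : ℚ_[p]) ≠ 0 := Nat.cast_ne_zero.2 (Fact.out (p := p.Prime)).ne_zero
lemma pR_pos : (0:ℝ) < (p:ℝ) := Nat.cast_pos.2 (Fact.out (p := p.Prime)).pos
lemma pR_lt : (1:ℝ) < (p:ℝ) := by exact_mod_cast (Fact.out (p := p.Prime)).one_lt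

lemma inLat_iff {n : ℤ} {a : ℚ_[p]} : inLat p n a ↔ ‖a‖ ≤ (p:ℝ) ^ (-n) := by
  have hzp : ∀ m : ℤ, ((p:ℝ)⁻¹) ^ m = (p:ℝ) ^ (-m) := fun m => by
    rw [_root_.inv_zpow, ← _root_.zpow_neg]
  constructor
  · rintro ⟨z, rfl⟩
    rw [norm_mul, norm_zpow, Padic.norm_p, hzp]
    calc (p:ℝ) ^ (-n) * ‖(z:ℚ_[p])‖ ≤ (p:ℝ) ^ (-n) * 1 :=
          mul_le_mul_of_nonneg_left z.norm_le_one (le_of_lt (zpow_pos (pR_pos p) _))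
      _ = (p:ℝ) ^ (-n) := mul_one _
  · intro h
    refine ⟨⟨a * (p:ℚ_[p]) ^ (-n), ?_⟩, ?_⟩
    · show ‖a * (p:ℚ_[p]) ^ (-n)‖ ≤ 1
      rw [norm_mul, norm_zpow, Padic.norm_p, hzp, neg_neg]
      calc ‖a‖ * (p:ℝ) ^ n ≤ (p:ℝ) ^ (-n) * (p:ℝ) ^ n :=
            mul_le_mul_of_nonneg_right h (le_of_lt (zpow_pos (pR_pos p) _))
        _ = 1 := by rw [← zpow_add₀ (ne_of_gt (pR_pos p))]; simp
    · show a = (p:ℚ_[p]) ^ n * (a * (p:ℚ_[p]) ^ (-n))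
      rw [_root_.zpow_neg]
      rw [mul_comm, mul_assoc, inv_mul_cancel₀ (zpow_ne_zero _ (pQ_ne p)), mul_one]

lemma inLat_zero {n : ℤ} : inLat p n (0 : ℚ_[p]) := ⟨0, by simp⟩

lemma inLat_add {n : ℤ} {a b : ℚ_[p]} (ha : inLat p n a) (hb : inLat p n b) :
    inLat p n (a + b) := by
  rw [inLat_iff] at *
  exact le_trans (Padic.nonarchimedean a b) (max_le ha hb)

lemma inLat_neg {n : ℤ} {a : ℚ_[p]} (ha : inLat p n a) : inLat p n (-a) := by
  rw [inLat_iff] at *; rwa [norm_neg]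

lemma inLat_sub {n : ℤ} {a b : ℚ_[p]} (ha : inLat p n a) (hb : inLat p n b) :
    inLat p n (a - b) := by
  rw [sub_eq_add_neg]; exact inLat_add p ha (inLat_neg p hb)

lemma inLat_mul {n m k : ℤ} {a b : ℚ_[p]} (ha : inLat p n a) (hb : inLat p m b)
    (hk : k ≤ n + m) : inLat p k (a * b) := by
  rw [inLat_iff] at *
  rw [norm_mul]
  calc ‖a‖ * ‖b‖ ≤ (p:ℝ) ^ (-n) * (p:ℝ) ^ (-m) :=
        mul_le_mul ha hb (norm_nonneg b) (le_of_lt (zpow_pos (pR_pos p) _))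
    _ = (p:ℝ) ^ (-(n+m)) := by rw [← zpow_add₀ (ne_of_gt (pR_pos p))]; ring_nf
    _ ≤ (p:ℝ) ^ (-k) := by
        apply zpow_le_zpow_right₀ (le_of_lt (pR_lt p)); omega

lemma inLat_pow {n m : ℤ} (h : n ≤ m) : inLat p n ((p:ℚ_[p]) ^ m) := by
  rw [inLat_iff, norm_zpow, Padic.norm_p, _root_.inv_zpow, ← _root_.zpow_neg]
  apply zpow_le_zpow_right₀ (le_of_lt (pR_lt p)); omega

lemma le_of_inLat_pow {n m : ℤ} (h : inLat p n ((p:ℚ_[p]) ^ m)) : n ≤ m := by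
  rw [inLat_iff, norm_zpow, Padic.norm_p, _root_.inv_zpow, ← _root_.zpow_neg] at h
  have := (zpow_le_zpow_iff_right₀ (pR_lt p)).1 h
  omega


/-- `Λ(0; 1, −1, 0; −1, 1, 0; 0)` is an order, maximal among orders of
diagonal form. -/
theorem lam_maximal_order (hp : p ≠ 2) :
    IsOrder p (Lam p 0 1 (-1) 0 (-1) 1 0 0) ∧
    ∀ b₁ b₂ b₃ b₄ b₅ b₆ b₇ b₈ : ℤ,
      IsOrder p (Lam p b₁ b₂ b₃ b₄ b₅ b₆ b₇ b₈) →
      Lam p 0 1 (-1) 0 (-1) 1 0 0 ⊆ Lam p b₁ b₂ b₃ b₄ b₅ b₆ b₇ b₈ →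
      Lam p b₁ b₂ b₃ b₄ b₅ b₆ b₇ b₈ = Lam p 0 1 (-1) 0 (-1) 1 0 0 := by
  constructor
  · -- Λ₀ is an order
    constructor
    · exact ⟨⟨1, by simp [zone]⟩, inLat_zero p, inLat_zero p, inLat_zero p,
        inLat_zero p, inLat_zero p, inLat_zero p, ⟨1, by simp [zone]⟩⟩
    · rintro x ⟨ha, hv0, hv1, hv2, hw0, hw1, hw2, hd⟩
      rintro y ⟨ha', hv0', hv1', hv2', hw0', hw1', hw2', hd'⟩
      refine ⟨?_, ?_, ?_, ?_, ?_, ?_, ?_, ?_⟩ <;>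
        simp only [zmul, cross_apply, Pi.add_apply, Pi.sub_apply, Pi.smul_apply,
          smul_eq_mul, dotProduct, Fin.sum_univ_three, Matrix.cons_val_zero,
          Matrix.cons_val_one, Matrix.head_cons, Matrix.cons_val_two, Matrix.tail_cons]
      · exact inLat_add p (inLat_mul p ha ha' (by omega))
          (inLat_add p (inLat_add p (inLat_mul p hv0 hw0' (by omega))
            (inLat_mul p hv1 hw1' (by omega))) (inLat_mul p hv2 hw2' (by omega)))
      · exact inLat_sub p (inLat_add p (inLat_mul p ha hv0' (by omega))
          (inLat_mul p hd' hv0 (by omega)))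
          (inLat_sub p (inLat_mul p hw1 hw2' (by omega)) (inLat_mul p hw2 hw1' (by omega)))
      · exact inLat_sub p (inLat_add p (inLat_mul p ha hv1' (by omega))
          (inLat_mul p hd' hv1 (by omega)))
          (inLat_sub p (inLat_mul p hw2 hw0' (by omega)) (inLat_mul p hw0 hw2' (by omega)))
      · exact inLat_sub p (inLat_add p (inLat_mul p ha hv2' (by omega))
          (inLat_mul p hd' hv2 (by omega)))
          (inLat_sub p (inLat_mul p hw0 hw1' (by omega)) (inLat_mul p hw1 hw0' (by omega)))
      · exact inLat_add p (inLat_add p (inLat_mul p ha' hw0 (by omega))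
          (inLat_mul p hd hw0' (by omega)))
          (inLat_sub p (inLat_mul p hv1 hv2' (by omega)) (inLat_mul p hv2 hv1' (by omega)))
      · exact inLat_add p (inLat_add p (inLat_mul p ha' hw1 (by omega))
          (inLat_mul p hd hw1' (by omega)))
          (inLat_sub p (inLat_mul p hv2 hv0' (by omega)) (inLat_mul p hv0 hv2' (by omega)))
      · exact inLat_add p (inLat_add p (inLat_mul p ha' hw2 (by omega))
          (inLat_mul p hd hw2' (by omega)))
          (inLat_sub p (inLat_mul p hv0 hv1' (by omega)) (inLat_mul p hv1 hv0' (by omega)))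
      · exact inLat_add p (inLat_mul p hd hd' (by omega))
          (inLat_add p (inLat_add p (inLat_mul p hw0 hv0' (by omega))
            (inLat_mul p hw1 hv1' (by omega))) (inLat_mul p hw2 hv2' (by omega)))
  · -- maximality
    intro b₁ b₂ b₃ b₄ b₅ b₆ b₇ b₈ hord hsub
    have hz := inLat_zero
    -- upper bounds from the element of Λ₀ with exact powers in every slot
    have hfull : (((p:ℚ_[p])^(0:ℤ), ![(p:ℚ_[p])^(1:ℤ), (p:ℚ_[p])^(-1:ℤ), (p:ℚ_[p])^(0:ℤ)],
        ![(p:ℚ_[p])^(-1:ℤ), (p:ℚ_[p])^(1:ℤ), (p:ℚ_[p])^(0:ℤ)], (p:ℚ_[p])^(0:ℤ)) : Zorn ℚ_[p]) ∈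
        Lam p 0 1 (-1) 0 (-1) 1 0 0 := by
      refine ⟨?_, ?_, ?_, ?_, ?_, ?_, ?_, ?_⟩ <;>
        simp only [Matrix.cons_val_zero, Matrix.cons_val_one, Matrix.head_cons,
          Matrix.cons_val_two, Matrix.tail_cons] <;>
        exact inLat_pow p le_rfl
    obtain ⟨u1, u2, u3, u4, u5, u6, u7, u8⟩ := hsub hfull
    simp only [Matrix.cons_val_zero, Matrix.cons_val_one, Matrix.head_cons,
      Matrix.cons_val_two, Matrix.tail_cons] at u1 u2 u3 u4 u5 u6 u7 u8
    replace u1 := le_of_inLat_pow p u1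
    replace u2 := le_of_inLat_pow p u2
    replace u3 := le_of_inLat_pow p u3
    replace u4 := le_of_inLat_pow p u4
    replace u5 := le_of_inLat_pow p u5
    replace u6 := le_of_inLat_pow p u6
    replace u7 := le_of_inLat_pow p u7
    replace u8 := le_of_inLat_pow p u8
    -- lower bounds from closure under multiplication
    have hA : (((p:ℚ_[p])^b₁, 0, 0, 0) : Zorn ℚ_[p]) ∈ Lam p b₁ b₂ b₃ b₄ b₅ b₆ b₇ b₈ :=
      ⟨inLat_pow p le_rfl, hz p, hz p, hz p, hz p, hz p, hz p, hz p⟩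
    have hD : ((0, 0, 0, (p:ℚ_[p])^b₈) : Zorn ℚ_[p]) ∈ Lam p b₁ b₂ b₃ b₄ b₅ b₆ b₇ b₈ :=
      ⟨hz p, hz p, hz p, hz p, hz p, hz p, hz p, inLat_pow p le_rfl⟩
    have hV1 : ((0, ![(p:ℚ_[p])^b₂, 0, 0], 0, 0) : Zorn ℚ_[p]) ∈ Lam p b₁ b₂ b₃ b₄ b₅ b₆ b₇ b₈ :=
      ⟨hz p, inLat_pow p le_rfl, hz p, hz p, hz p, hz p, hz p, hz p⟩
    have hV2 : ((0, ![0, (p:ℚ_[p])^b₃, 0], 0, 0) : Zorn ℚ_[p]) ∈ Lam p b₁ b₂ b₃ b₄ b₅ b₆ b₇ b₈ :=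
      ⟨hz p, hz p, inLat_pow p le_rfl, hz p, hz p, hz p, hz p, hz p⟩
    have hV3 : ((0, ![0, 0, (p:ℚ_[p])^b₄], 0, 0) : Zorn ℚ_[p]) ∈ Lam p b₁ b₂ b₃ b₄ b₅ b₆ b₇ b₈ :=
      ⟨hz p, hz p, hz p, inLat_pow p le_rfl, hz p, hz p, hz p, hz p⟩
    have hW1 : ((0, 0, ![(p:ℚ_[p])^b₅, 0, 0], 0) : Zorn ℚ_[p]) ∈ Lam p b₁ b₂ b₃ b₄ b₅ b₆ b₇ b₈ :=
      ⟨hz p, hz p, hz p, hz p, inLat_pow p le_rfl, hz p, hz p, hz p⟩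
    have hW2 : ((0, 0, ![0, (p:ℚ_[p])^b₆, 0], 0) : Zorn ℚ_[p]) ∈ Lam p b₁ b₂ b₃ b₄ b₅ b₆ b₇ b₈ :=
      ⟨hz p, hz p, hz p, hz p, hz p, inLat_pow p le_rfl, hz p, hz p⟩
    have hW3 : ((0, 0, ![0, 0, (p:ℚ_[p])^b₇], 0) : Zorn ℚ_[p]) ∈ Lam p b₁ b₂ b₃ b₄ b₅ b₆ b₇ b₈ :=
      ⟨hz p, hz p, hz p, hz p, hz p, hz p, inLat_pow p le_rfl, hz p⟩
    have q1 : b₁ ≤ b₁ + b₁ := by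
      have h := (hord.2 _ hA _ hA).1
      have h' : inLat p b₁ ((p:ℚ_[p])^(b₁+b₁)) := by
        simpa [zmul, zpow_add₀ (pQ_ne p)] using h
      exact le_of_inLat_pow p h'
    have q8 : b₈ ≤ b₈ + b₈ := by
      have h := (hord.2 _ hD _ hD).2.2.2.2.2.2.2
      have h' : inLat p b₈ ((p:ℚ_[p])^(b₈+b₈)) := by
        simpa [zmul, zpow_add₀ (pQ_ne p)] using h
      exact le_of_inLat_pow p h'
    have c1 : b₁ ≤ b₂ + b₅ := by
      have h := (hord.2 _ hV1 _ hW1).1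
      have h' : inLat p b₁ ((p:ℚ_[p])^(b₂+b₅)) := by
        simpa [zmul, dotProduct, Fin.sum_univ_three, zpow_add₀ (pQ_ne p)] using h
      exact le_of_inLat_pow p h'
    have c2 : b₁ ≤ b₃ + b₆ := by
      have h := (hord.2 _ hV2 _ hW2).1
      have h' : inLat p b₁ ((p:ℚ_[p])^(b₃+b₆)) := by
        simpa [zmul, dotProduct, Fin.sum_univ_three, zpow_add₀ (pQ_ne p)] using h
      exact le_of_inLat_pow p h'
    have c3 : b₁ ≤ b₄ + b₇ := by
      have h := (hord.2 _ hV3 _ hW3).1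
      have h' : inLat p b₁ ((p:ℚ_[p])^(b₄+b₇)) := by
        simpa [zmul, dotProduct, Fin.sum_univ_three, zpow_add₀ (pQ_ne p)] using h
      exact le_of_inLat_pow p h'
    obtain ⟨rfl, rfl, rfl, rfl, rfl, rfl, rfl, rfl⟩ :
        b₁ = 0 ∧ b₂ = 1 ∧ b₃ = -1 ∧ b₄ = 0 ∧ b₅ = -1 ∧ b₆ = 1 ∧ b₇ = 0 ∧ b₈ = 0 := by
      omega
    rfl
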